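/- arXiv:2204.11012 — 5 statements merged into one kernel-verified Lean document; each statement's English description precedes it below -/
import Mathlib

section
/- Given a highway cover labelling Γ = (H, L) over G with landmarks R, for any s,t ∈ V, the minimum of d_{G[V∖R]}(s,t) (the distance in the subgraph induced by removing all landmarks) and the highway upper bound d⊤_st equals d_G(s,t). -/
open scoped Classical

variable {V : Type*}

namespace BatchHL

/-- `l` is a walk in `G` from `r` to `v`, given as its (nonempty) list of visited vertices. -/
def IsWalk (G : SimpleGraph V) (r v : V) (l : List V) : Prop :=
  l ≠ [] ∧ l.head? = some r ∧ l.getLast? = some v ∧ l.Chain' G.Adj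

/-- The length (number of edges) of a walk given as a list of vertices. -/
def len (l : List V) : ℕ := l.length - 1

/-- The walk `l` passes through the (undirected) edge `(a, b)`. -/
def Passes (l : List V) (a b : V) : Prop :=
  (a, b) ∈ l.zip l.tail ∨ (b, a) ∈ l.zip l.tail

/-- `P_G(r,v)`: the set of all shortest paths between `r` and `v` in `G`. -/
def SPaths (G : SimpleGraph V) (r v : V) : Set (List V) :=
  {l | IsWalk G r v l ∧ ∀ l', IsWalk G r v l' → l.length ≤ l'.length}

/-- `(a,b)` is an edge deleted by the batch update turning `G` into `G'`. -/
def DeletedEdge (G G' : SimpleGraph V) (a b : V) : Prop := G.Adj a b ∧ ¬ G'.Adj a b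

/-- `(a,b)` is an edge inserted by the batch update turning `G` into `G'`. -/
def InsertedEdge (G G' : SimpleGraph V) (a b : V) : Prop := G'.Adj a b ∧ ¬ G.Adj a b

/-- `(a,b)` is an edge of the batch update `B` turning `G` into `G'`. -/
def UpdatedEdge (G G' : SimpleGraph V) (a b : V) : Prop :=
  InsertedEdge G G' a b ∨ DeletedEdge G G' a b

/-- The walk `l` passes through a deleted edge. -/
def PassesDeleted (G G' : SimpleGraph V) (l : List V) : Prop :=
  ∃ a b, DeletedEdge G G' a b ∧ Passes l a b

/-- The walk `l` passes through an inserted edge. -/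
def PassesInserted (G G' : SimpleGraph V) (l : List V) : Prop :=
  ∃ a b, InsertedEdge G G' a b ∧ Passes l a b

/-- `v` is affected w.r.t. landmark `r` iff the set of shortest paths changes. -/
def Affected (G G' : SimpleGraph V) (r v : V) : Prop := SPaths G r v ≠ SPaths G' r v

/-- A composite path from `r` to `v`: a prefix lying in `G` followed by a suffix lying in `G'`. -/
def IsComposite (G G' : SimpleGraph V) (r v : V) (l : List V) : Prop :=
  ∃ w l₁ l₂, IsWalk G r w l₁ ∧ IsWalk G' w v l₂ ∧ l = l₁ ++ l₂.tail

/-- A significant composite path: a composite path whose `G`-prefix passes through a deleted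
edge and whose `G'`-suffix passes through an inserted edge. -/
def IsSigComposite (G G' : SimpleGraph V) (r v : V) (l : List V) : Prop :=
  ∃ w l₁ l₂, IsWalk G r w l₁ ∧ IsWalk G' w v l₂ ∧ l = l₁ ++ l₂.tail ∧
    PassesDeleted G G' l₁ ∧ PassesInserted G G' l₂

/-- `v` is composite-path affected w.r.t. `r`. -/
def CPAffected (G G' : SimpleGraph V) (r v : V) : Prop :=
  Affected G G' r v ∨ ∃ l, IsSigComposite G G' r v l ∧ (len l : ℕ∞) ≤ G.edist r v

/-- A distance labelling: each label entry `(r, δ) ∈ L v` satisfies `δ = d_G(r,v)`. -/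
def IsLabelling (G : SimpleGraph V) (L : V → Set (V × ℕ∞)) : Prop :=
  ∀ v r δ, (r, δ) ∈ L v → δ = G.edist r v

/-- A 2-hop cover labelling: a distance labelling such that every pair `s, t` has a common
hub `r` lying on a shortest path between `s` and `t`. -/
def Is2HopCover (G : SimpleGraph V) (L : V → Set (V × ℕ∞)) : Prop :=
  IsLabelling G L ∧ ∀ s t : V, ∃ r, (r, G.edist r s) ∈ L s ∧ (r, G.edist r t) ∈ L t ∧
    G.edist s r + G.edist r t = G.edist s t

/-- A highway cover labelling `Γ = (H, L)` over `G` with landmarks `R`.  The highway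
distances `δ_H(r,r_i)` are by definition the graph distances `d_G(r,r_i)`. -/
def IsHighwayCover (G : SimpleGraph V) (R : Set V) (L : V → Set (V × ℕ∞)) : Prop :=
  (∀ v r δ, (r, δ) ∈ L v → r ∈ R ∧ δ = G.edist r v) ∧
  ∀ v, v ∉ R → ∀ r ∈ R,
    G.edist r v = sInf {x | ∃ ri δ, (ri, δ) ∈ L v ∧ x = δ + G.edist r ri}

/-- The landmark length / landmark distance values: `⊤` for "no path", otherwise a pair of a
length and a landmark flag (a `Prop`). -/
abbrev LLen := WithTop (ℕ × Prop)

/-- Lexicographic order on landmark lengths, with flag ordering `True < False`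
(i.e. `x ≤ y` at equal length iff `y`'s flag implies `x`'s flag). -/
def llLe : LLen → LLen → Prop
  | _, none => True
  | none, some _ => False
  | some a, some b => a.1 < b.1 ∨ (a.1 = b.1 ∧ (b.2 → a.2))

/-- Strict lexicographic order on landmark lengths. -/
def llLt (x y : LLen) : Prop := llLe x y ∧ ¬ llLe y x

/-- The extension operator `⊕`: `(d,l) ⊕ w = (d+1, True)` if `w ∈ R∖{r}`, else `(d+1, l)`. -/
def oplus (R : Set V) (r : V) : LLen → V → LLen
  | none, _ => none
  | some a, w => some (a.1 + 1, (w ∈ R ∧ w ≠ r) ∨ a.2)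

/-- The landmark length `lml(l)` of a walk `l` starting at `r`: its length together with the
flag recording whether it passes through a landmark other than `r`. -/
def lmLen (R : Set V) (r : V) (l : List V) : LLen :=
  some (len l, ∃ w ∈ l, w ∈ R ∧ w ≠ r)

/-- The landmark distance `d^L_G(r,v)`: the lexicographically minimal landmark length of a
walk from `r` to `v` (with `True < False` on flags), `⊤` if there is none.  Explicitly, its
length component is the minimal walk length and its flag holds iff some walk of minimal
length passes through a landmark other than `r`. -/
noncomputable def lmDist (G : SimpleGraph V) (R : Set V) (r v : V) : LLen :=
  if ∃ l, IsWalk G r v l then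
    some (sInf {n | ∃ l, IsWalk G r v l ∧ len l = n},
      ∃ l, IsWalk G r v l ∧ len l = sInf {n | ∃ l', IsWalk G r v l' ∧ len l' = n} ∧
        ∃ w ∈ l, w ∈ R ∧ w ≠ r)
  else ⊤

/-- Order on extended landmark lengths `(landmark length, deletion flag)`, lexicographic with
`True < False` on the deletion flag. -/
def ellLe (x y : LLen × Prop) : Prop := llLt x.1 y.1 ∨ (x.1 = y.1 ∧ (y.2 → x.2))

/-- Strict order on extended landmark lengths. -/
def ellLt (x y : LLen × Prop) : Prop := ellLe x y ∧ ¬ ellLe y x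

/-- `β(r,v) = (d^L_G(r,v), True)`. -/
noncomputable def beta (G : SimpleGraph V) (R : Set V) (r v : V) : LLen × Prop :=
  (lmDist G R r v, True)

/-- The distance bound `d_bou(u, S)` of `u` w.r.t. `S` in `G'`. -/
noncomputable def dbou (G' : SimpleGraph V) (r : V) (S : Set V) (u : V) : ℕ∞ :=
  ⨅ (w : V) (_ : G'.Adj u w ∧ w ∉ S), (G'.edist r w + 1)

/-- The set `{ d^L_{G'}(r,w) ⊕ v | w ∈ N_{G'}(v) ∖ S }`, whose lexicographic minimum is the
landmark distance bound `d^L_bou(v,S)`. -/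
noncomputable def lmBouSet (G' : SimpleGraph V) (R : Set V) (r v : V) (S : Set V) :
    Set LLen :=
  {x | ∃ w, G'.Adj v w ∧ w ∉ S ∧ x = oplus R r (lmDist G' R r w) v}

/-- The subgraph `G[V ∖ R]` obtained by removing all landmarks (landmarks become isolated). -/
def removeLandmarks (G : SimpleGraph V) (R : Set V) : SimpleGraph V where
  Adj u w := G.Adj u w ∧ u ∉ R ∧ w ∉ R
  symm := ⟨fun u w ⟨h, hu, hw⟩ => ⟨h.symm, hw, hu⟩⟩
  loopless := ⟨fun u ⟨h, _, _⟩ => G.loopless.irrefl u h⟩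

/-- A highway cover labelling in which every vertex (including landmarks) is labelled, i.e.
the highway cover property holds for all `v ∈ V` (this is the labelling produced on all
vertices by the highway labelling construction). -/
def IsHighwayCoverAll (G : SimpleGraph V) (R : Set V) (L : V → Set (V × ℕ∞)) : Prop :=
  (∀ v r δ, (r, δ) ∈ L v → r ∈ R ∧ δ = G.edist r v) ∧
  ∀ v, ∀ r ∈ R,
    G.edist r v = sInf {x | ∃ ri δ, (ri, δ) ∈ L v ∧ x = δ + G.edist r ri}

/-- Given a highway cover labelling `Γ = (H,L)` over `G` with landmarks `R`,
for any `s,t ∈ V`, the minimum of `d_{G[V∖R]}(s,t)` (the distance in the subgraph obtained by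
removing all landmarks) and the highway upper bound `d⊤_st` equals `d_G(s,t)`. -/
theorem query_answering_correct (G : SimpleGraph V) (R : Set V) (L : V → Set (V × ℕ∞))
    (hL : IsHighwayCoverAll G R L) (s t : V) :
    min ((removeLandmarks G R).edist s t)
        (sInf {x : ℕ∞ | ∃ ri rj ds dt, (ri, ds) ∈ L s ∧ (rj, dt) ∈ L t ∧
          x = ds + G.edist ri rj + dt})
      = G.edist s t := by
  apply le_antisymm
  · -- upper bound: min ≤ edist
    rcases eq_or_ne (G.edist s t) ⊤ with htop | htop
    · rw [htop]; exact le_top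
    obtain ⟨p, hp⟩ := SimpleGraph.exists_walk_of_edist_ne_top htop
    by_cases hland : ∃ r ∈ p.support, r ∈ R
    · -- shortest path through a landmark r
      obtain ⟨r, hrp, hrR⟩ := hland
      -- d(s,r) + d(r,t) ≤ d(s,t)
      have hsplit : G.edist s r + G.edist r t ≤ G.edist s t := by
        calc G.edist s r + G.edist r t
            ≤ ((p.takeUntil r hrp).length : ℕ∞) + ((p.dropUntil r hrp).length : ℕ∞) :=
              add_le_add (SimpleGraph.edist_le _) (SimpleGraph.edist_le _)
          _ = (p.length : ℕ∞) := by
              rw [← Nat.cast_add, ← SimpleGraph.Walk.length_append, p.take_spec hrp]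
          _ = G.edist s t := hp
      -- labels at s and t via the highway cover property
      have hs := (hL.2 s r hrR)
      have ht := (hL.2 t r hrR)
      have hsr_ne : G.edist r s ≠ ⊤ := by
        rw [SimpleGraph.edist_comm]
        intro h
        rw [h] at hsplit
        simp at hsplit
        exact htop hsplit
      have hrt_ne : G.edist r t ≠ ⊤ := by
        intro h
        rw [h, add_top] at hsplit
        exact htop (le_antisymm le_top hsplit)
      -- the label sets are nonempty, and sInf is attained
      have hSs : {x | ∃ ri δ, (ri, δ) ∈ L s ∧ x = δ + G.edist r ri}.Nonempty := by
        rw [Set.nonempty_iff_ne_empty]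
        intro h
        rw [h, sInf_empty] at hs
        exact hsr_ne hs
      have hSt : {x | ∃ ri δ, (ri, δ) ∈ L t ∧ x = δ + G.edist r ri}.Nonempty := by
        rw [Set.nonempty_iff_ne_empty]
        intro h
        rw [h, sInf_empty] at ht
        exact hrt_ne ht
      obtain ⟨ri, ds, hlds, heqs⟩ := csInf_mem hSs
      obtain ⟨rj, dt, hldt, heqt⟩ := csInf_mem hSt
      rw [← hs] at heqs
      rw [← ht] at heqt
      refine le_trans (min_le_right _ _) ?_
      refine le_trans (sInf_le ⟨ri, rj, ds, dt, hlds, hldt, rfl⟩) ?_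
      calc ds + G.edist ri rj + dt
          ≤ ds + (G.edist ri r + G.edist r rj) + dt := by
            gcongr; exact SimpleGraph.edist_triangle
        _ = (ds + G.edist r ri) + (dt + G.edist r rj) := by
            rw [SimpleGraph.edist_comm (u := ri)]; ring
        _ = G.edist r s + G.edist r t := by rw [← heqs, ← heqt]
        _ = G.edist s r + G.edist r t := by rw [SimpleGraph.edist_comm (u := r) (v := s)]
        _ ≤ G.edist s t := hsplit
    · -- shortest path avoids all landmarks
      push_neg at hland
      have hedges : ∀ e ∈ p.edges, e ∈ (removeLandmarks G R).edgeSet := by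
        intro e he
        induction e using Sym2.ind with
        | _ a b =>
          exact ⟨p.adj_of_mem_edges he, hland a (p.fst_mem_support_of_mem_edges he),
            hland b (p.snd_mem_support_of_mem_edges he)⟩
      refine le_trans (min_le_left _ _) ?_
      calc (removeLandmarks G R).edist s t ≤ ((p.transfer _ hedges).length : ℕ∞) :=
            SimpleGraph.edist_le _
        _ = (p.length : ℕ∞) := by rw [SimpleGraph.Walk.length_transfer]
        _ = G.edist s t := hp
  · -- lower bound
    apply le_min
    · exact SimpleGraph.edist_anti (fun u w h => h.1)
    · refine le_sInf fun x hx => ?_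
      obtain ⟨ri, rj, ds, dt, hds, hdt, rfl⟩ := hx
      obtain ⟨-, hds'⟩ := hL.1 s ri ds hds
      obtain ⟨-, hdt'⟩ := hL.1 t rj dt hdt
      subst hds' hdt'
      calc G.edist s t ≤ G.edist s ri + G.edist ri t := SimpleGraph.edist_triangle
        _ ≤ G.edist s ri + (G.edist ri rj + G.edist rj t) :=
            add_le_add_right SimpleGraph.edist_triangle _
        _ = G.edist ri s + G.edist ri rj + G.edist rj t := by
            rw [SimpleGraph.edist_comm (u := s)]; ring


end BatchHL
end

section
/- If a vertex v is affected by a batch update B w.r.t. landmark r (P_G(r,v) ≠ P_{G'}(r,v)), then there exists a composite path p from r to v of length at most d_G(r,v) that passes through some edge of B, where p decomposes into a prefix lying in G followed by a suffix lying in G'. -/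
open scoped Classical

variable {V : Type*}

namespace BatchHL

/-- A singleton list is a walk. -/
lemma isWalk_singleton (G : SimpleGraph V) (v : V) : IsWalk G v v [v] := by
  refine ⟨by simp, rfl, rfl, List.isChain_singleton v⟩

lemma IsWalk.ne_nil {G : SimpleGraph V} {r v : V} {l : List V} (h : IsWalk G r v l) :
    l ≠ [] := h.1

lemma IsWalk.eq_cons {G : SimpleGraph V} {r v : V} {l : List V} (h : IsWalk G r v l) :
    l = r :: l.tail := by
  obtain ⟨hne, hh, -, -⟩ := h
  cases l with
  | nil => simp at hne
  | cons a t => simp only [List.head?_cons, Option.some.injEq] at hh; simp [hh]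

/-- A chain for `Q` that fails to be a chain for `P` contains a consecutive pair
satisfying `Q` but not `P`. -/
lemma exists_pair_of_not_chain' {P Q : V → V → Prop} :
    ∀ l : List V, l.Chain' Q → ¬ l.Chain' P →
      ∃ a b, (a, b) ∈ l.zip l.tail ∧ Q a b ∧ ¬ P a b := by
  intro l
  induction l with
  | nil => intro _ hP; exact absurd List.isChain_nil hP
  | cons x t ih =>
    cases t with
    | nil => intro _ hP; exact absurd (List.isChain_singleton x) hP
    | cons y t' =>
      intro hQ hP
      simp only [List.Chain', List.isChain_cons_cons] at hQ hP
      by_cases hxy : P x y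
      · obtain ⟨a, b, hm, hq, hp⟩ := ih hQ.2 (fun hc => hP ⟨hxy, hc⟩)
        exact ⟨a, b, by simp [List.zip, hm, List.mem_cons]; right; exact hm, hq, hp⟩
      · exact ⟨x, y, by simp, hQ.1, hxy⟩

/-- The support of a graph walk is a list walk of the same length. -/
lemma isWalk_support {G : SimpleGraph V} {r v : V} (p : G.Walk r v) :
    IsWalk G r v p.support := by
  refine ⟨p.support_ne_nil, ?_, ?_, p.isChain_adj_support⟩
  · rw [List.head?_eq_head p.support_ne_nil, p.head_support]
  · rw [List.getLast?_eq_getLast p.support_ne_nil, p.getLast_support]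

/-- A minimal list walk has length at most the graph distance. -/
lemma min_walk_le_edist {G : SimpleGraph V} {r v : V} {m : List V}
    (hm : IsWalk G r v m) (hmin : ∀ l', IsWalk G r v l' → m.length ≤ l'.length) :
    (len m : ℕ∞) ≤ G.edist r v := by
  by_cases htop : G.edist r v = ⊤
  · simp [htop]
  · obtain ⟨p, hp⟩ := SimpleGraph.exists_walk_of_edist_ne_top htop
    rw [← hp]
    have h1 := hmin _ (isWalk_support p)
    rw [p.length_support] at h1
    have : len m ≤ p.length := by
      unfold len; omega
    exact_mod_cast this

/-- Existence of a minimal list walk. -/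
lemma exists_min_walk {G : SimpleGraph V} {r v : V} (h : ∃ l, IsWalk G r v l) :
    ∃ m, IsWalk G r v m ∧ ∀ l', IsWalk G r v l' → m.length ≤ l'.length := by
  obtain ⟨l0, hl0⟩ := h
  have hne : {n | ∃ l, IsWalk G r v l ∧ l.length = n}.Nonempty := ⟨l0.length, l0, hl0, rfl⟩
  obtain ⟨m, hm, hlen⟩ := Nat.sInf_mem hne
  refine ⟨m, hm, fun l' hl' => ?_⟩
  rw [hlen]
  exact Nat.sInf_le ⟨l', hl', rfl⟩

/-- A `G`-walk containing a deleted edge yields the conclusion. -/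
lemma conclusion_of_G_walk {G G' : SimpleGraph V} {r v : V} {m : List V}
    (hm : IsWalk G r v m) (hlen : (len m : ℕ∞) ≤ G.edist r v)
    (hnot : ¬ m.Chain' G'.Adj) :
    ∃ l, IsComposite G G' r v l ∧ (len l : ℕ∞) ≤ G.edist r v ∧
      ∃ a b, UpdatedEdge G G' a b ∧ Passes l a b := by
  obtain ⟨a, b, hmem, hq, hp⟩ := exists_pair_of_not_chain' m hm.2.2.2 hnot
  refine ⟨m, ⟨v, m, [v], hm, isWalk_singleton G' v, by simp⟩, hlen,
    a, b, Or.inr ⟨hq, hp⟩, Or.inl hmem⟩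

/-- A `G'`-walk containing an inserted edge yields the conclusion. -/
lemma conclusion_of_G'_walk {G G' : SimpleGraph V} {r v : V} {m : List V}
    (hm : IsWalk G' r v m) (hlen : (len m : ℕ∞) ≤ G.edist r v)
    (hnot : ¬ m.Chain' G.Adj) :
    ∃ l, IsComposite G G' r v l ∧ (len l : ℕ∞) ≤ G.edist r v ∧
      ∃ a b, UpdatedEdge G G' a b ∧ Passes l a b := by
  obtain ⟨a, b, hmem, hq, hp⟩ := exists_pair_of_not_chain' m hm.2.2.2 hnot
  refine ⟨m, ⟨r, [r], m, isWalk_singleton G r, hm, ?_⟩, hlen,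
    a, b, Or.inl ⟨hq, hp⟩, Or.inl hmem⟩
  conv_lhs => rw [hm.eq_cons]
  rfl

/-- If `v` is affected by the batch update w.r.t. `r`, then there exists a
composite path `p` from `r` to `v` of length at most `d_G(r,v)` that passes through some
updated edge. -/
theorem affected_implies_composite (G G' : SimpleGraph V) (r v : V)
    (h : Affected G G' r v) :
    ∃ l, IsComposite G G' r v l ∧ (len l : ℕ∞) ≤ G.edist r v ∧
      ∃ a b, UpdatedEdge G G' a b ∧ Passes l a b := by
  -- From `Affected`, get a walk in one set but not the other.
  rw [Affected, Ne, Set.ext_iff, not_forall] at h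
  obtain ⟨l, hl⟩ := h
  rw [iff_iff_implies_and_implies, not_and_or] at hl
  -- helper: a G-walk not a G'-walk gives a deleted edge conclusion (case i)
  have caseI : ∀ m : List V, IsWalk G r v m →
      (∀ l', IsWalk G r v l' → m.length ≤ l'.length) → ¬ m.Chain' G'.Adj →
      ∃ l, IsComposite G G' r v l ∧ (len l : ℕ∞) ≤ G.edist r v ∧
        ∃ a b, UpdatedEdge G G' a b ∧ Passes l a b := by
    intro m hm hmin hnot
    exact conclusion_of_G_walk hm (min_walk_le_edist hm hmin) hnot
  rcases hl with hl | hl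
  · -- l ∈ SPaths G, l ∉ SPaths G'
    rw [Classical.not_imp] at hl
    obtain ⟨⟨hlG, hlmin⟩, hl'⟩ := hl
    by_cases hch : l.Chain' G'.Adj
    · -- l is a walk in G' but not shortest there
      have hlG' : IsWalk G' r v l := ⟨hlG.1, hlG.2.1, hlG.2.2.1, hch⟩
      have : ¬ ∀ l', IsWalk G' r v l' → l.length ≤ l'.length := fun hmin' =>
        hl' ⟨hlG', hmin'⟩
      push_neg at this
      obtain ⟨l'', hl'', hlt⟩ := this
      obtain ⟨m', hm', hmin'⟩ := exists_min_walk ⟨l'', hl''⟩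
      have hm'lt : m'.length < l.length := lt_of_le_of_lt (hmin' _ hl'') hlt
      have hnotG : ¬ m'.Chain' G.Adj := by
        intro hc
        have : IsWalk G r v m' := ⟨hm'.1, hm'.2.1, hm'.2.2.1, hc⟩
        exact absurd (hlmin _ this) (by omega)
      refine conclusion_of_G'_walk hm' ?_ hnotG
      calc (len m' : ℕ∞) ≤ len l := by
            exact_mod_cast Nat.sub_le_sub_right hm'lt.le 1
        _ ≤ G.edist r v := min_walk_le_edist hlG (fun l' h => by
            simpa using hlmin l' h)
    · exact caseI l hlG hlmin hch
  · -- l ∈ SPaths G', l ∉ SPaths G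
    rw [Classical.not_imp] at hl
    obtain ⟨⟨hlG', hlmin'⟩, hl'⟩ := hl
    by_cases hch : l.Chain' G.Adj
    · -- l is a walk in G but not shortest there
      have hlG : IsWalk G r v l := ⟨hlG'.1, hlG'.2.1, hlG'.2.2.1, hch⟩
      have : ¬ ∀ l', IsWalk G r v l' → l.length ≤ l'.length := fun hmin =>
        hl' ⟨hlG, hmin⟩
      push_neg at this
      obtain ⟨l'', hl'', hlt⟩ := this
      obtain ⟨m, hm, hmin⟩ := exists_min_walk ⟨l'', hl''⟩
      have hmlt : m.length < l.length := lt_of_le_of_lt (hmin _ hl'') hlt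
      have hnotG' : ¬ m.Chain' G'.Adj := by
        intro hc
        have : IsWalk G' r v m := ⟨hm.1, hm.2.1, hm.2.2.1, hc⟩
        exact absurd (hlmin' _ this) (by omega)
      exact caseI m hm hmin hnotG'
    · -- l not a walk in G
      by_cases hex : ∃ l', IsWalk G r v l'
      · obtain ⟨m, hm, hmin⟩ := exists_min_walk hex
        by_cases hch' : m.Chain' G'.Adj
        · -- m is also a G'-walk, so l (shortest in G') has len l ≤ len m ≤ d_G
          have hmG' : IsWalk G' r v m := ⟨hm.1, hm.2.1, hm.2.2.1, hch'⟩
          have hle : l.length ≤ m.length := hlmin' _ hmG'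
          refine conclusion_of_G'_walk hlG' ?_ hch
          calc (len l : ℕ∞) ≤ len m := by
                exact_mod_cast Nat.sub_le_sub_right hle 1
            _ ≤ G.edist r v := min_walk_le_edist hm hmin
        · exact caseI m hm hmin hch'
      · -- no G-walk at all: d_G = ⊤
        have htop : G.edist r v = ⊤ := by
          by_contra hne
          obtain ⟨p, -⟩ := SimpleGraph.exists_walk_of_edist_ne_top hne
          exact hex ⟨p.support, isWalk_support p⟩
        exact conclusion_of_G'_walk hlG' (by simp [htop]) hch

end BatchHL
end

section
/- If there exists a path p from r to v lying entirely in G' whose length is at most d_G(r,v) and which passes through an edge inserted by the batch update (an edge in E'∖E), then v is affected w.r.t. r, i.e., P_G(r,v) ≠ P_{G'}(r,v). -/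
open scoped Classical

variable {V : Type*}

namespace BatchHL

lemma walk_of_chain (G : SimpleGraph V) : ∀ (l : List V) (a b : V),
    List.Chain G.Adj a l → (a :: l).getLast (List.cons_ne_nil a l) = b →
    ∃ w : G.Walk a b, w.length = l.length := by
  intro l
  induction l with
  | nil => intro a b _ hb; simp at hb; subst hb; exact ⟨SimpleGraph.Walk.nil, rfl⟩
  | cons c t ih =>
    intro a b hch hb
    rw [List.Chain, List.chain_cons] at hch
    have hb' : (c :: t).getLast (List.cons_ne_nil c t) = b := by
      rw [← hb]; exact (List.getLast_cons _).symm
    obtain ⟨w, hw⟩ := ih c b hch.2 hb'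
    exact ⟨SimpleGraph.Walk.cons hch.1 w, by simp [hw]⟩

lemma rel_of_zip {R : V → V → Prop} : ∀ (l : List V) (a b : V),
    l.Chain' R → (a, b) ∈ l.zip l.tail → R a b := by
  intro l
  induction l with
  | nil => simp
  | cons x t ih =>
    intro a b hch hm
    cases t with
    | nil => simp at hm
    | cons y s =>
      rw [List.Chain', List.isChain_cons_cons] at hch
      simp only [List.tail_cons, List.zip_cons_cons, List.mem_cons, Prod.mk.injEq] at hm
      rcases hm with ⟨ha, hb⟩ | hm
      · subst ha; subst hb; exact hch.1
      · exact ih a b hch.2 hm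

lemma edist_le_of_isWalk (G : SimpleGraph V) (r v : V) (l : List V)
    (h : IsWalk G r v l) : G.edist r v ≤ (len l : ℕ∞) := by
  obtain ⟨hne, hh, hlast, hch⟩ := h
  obtain ⟨a, t, rfl⟩ := List.exists_cons_of_ne_nil hne
  simp only [List.head?_cons, Option.some.injEq] at hh
  subst hh
  rw [List.getLast?_eq_getLast (List.cons_ne_nil _ _), Option.some.injEq] at hlast
  have hch' : List.Chain G.Adj a t := hch
  obtain ⟨w, hw⟩ := walk_of_chain G t a v hch' hlast
  calc G.edist a v ≤ (w.length : ℕ∞) := G.edist_le w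
    _ = (len (a :: t) : ℕ∞) := by simp [hw, len]

/-- If there is a path `p` from `r` to `v` lying entirely in `G'`, of length
at most `d_G(r,v)`, passing through an inserted edge, then `v` is affected w.r.t. `r`. -/
theorem inserted_path_affects (G G' : SimpleGraph V) (r v : V) (l : List V)
    (hl : IsWalk G' r v l) (hlen : (len l : ℕ∞) ≤ G.edist r v)
    (hins : PassesInserted G G' l) :
    Affected G G' r v := by
  intro heq
  set S : Set ℕ := {n | ∃ l', IsWalk G' r v l' ∧ l'.length = n} with hS
  have hSne : S.Nonempty := ⟨l.length, l, hl, rfl⟩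
  obtain ⟨l₀, hw₀, hlen₀⟩ : ∃ l₀, IsWalk G' r v l₀ ∧ l₀.length = sInf S := Nat.sInf_mem hSne
  have hmin : ∀ l'', IsWalk G' r v l'' → l₀.length ≤ l''.length := by
    intro l'' h''
    rw [hlen₀]
    exact Nat.sInf_le ⟨l'', h'', rfl⟩
  have hsp : l₀ ∈ SPaths G' r v := ⟨hw₀, hmin⟩
  rw [← heq] at hsp
  have hG : G.edist r v ≤ (len l₀ : ℕ∞) := edist_le_of_isWalk G r v l₀ hsp.1
  have h1 : (len l : ℕ∞) ≤ (len l₀ : ℕ∞) := hlen.trans hG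
  have h2 : len l₀ ≤ len l := by
    have := hmin l hl
    simp only [len]; omega
  have h3 : l.length = l₀.length := by
    have h1' : len l ≤ len l₀ := by exact_mod_cast h1
    have hne : l ≠ [] := hl.1
    have hne₀ : l₀ ≠ [] := hw₀.1
    have : 1 ≤ l.length := List.length_pos_iff.mpr hne
    have : 1 ≤ l₀.length := List.length_pos_iff.mpr hne₀
    simp only [len] at h1' h2
    omega
  have hlsp : l ∈ SPaths G' r v := ⟨hl, fun l'' h'' => h3 ▸ hmin l'' h''⟩
  rw [← heq] at hlsp
  obtain ⟨a, b, ⟨_, hnadj⟩, hp⟩ := hins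
  rcases hp with hp | hp
  · exact hnadj (rel_of_zip l a b hlsp.1.2.2.2 hp)
  · exact hnadj ((rel_of_zip l b a hlsp.1.2.2.2 hp).symm)

end BatchHL
end

section
/- Suppose v is LD-affected by a batch update w.r.t. landmark r and d^L_G(r,v) < d^L_{G'}(r,v) (landmark distance strictly increases). Then every path from r to v in G of minimal landmark length passes through a deleted edge, and hence has extended landmark length at most β(r,v) = (d^L_G(r,v), True). -/
open scoped Classical

variable {V : Type*}

namespace BatchHL

/-- **Lemma 6, case 1.** Suppose `v` is LD-affected w.r.t. `r` with
`d^L_G(r,v) < d^L_{G'}(r,v)` (landmark distance strictly increases).  Then every path from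
`r` to `v` in `G` of minimal landmark length passes through a deleted edge, and hence its
extended landmark length is at most `β(r,v) = (d^L_G(r,v), True)`. -/
theorem increase_case (G G' : SimpleGraph V) (R : Set V) (r v : V) (hr : r ∈ R)
    (h : llLt (lmDist G R r v) (lmDist G' R r v)) :
    ∀ l, IsWalk G r v l → lmLen R r l = lmDist G R r v →
      PassesDeleted G G' l ∧
      ellLe (lmLen R r l, PassesDeleted G G' l) (beta G R r v) := by
  have zip_adj : ∀ {R' : V → V → Prop} (l : List V), l.Chain' R' →
      ∀ a b, (a, b) ∈ l.zip l.tail → R' a b := by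
    intro R' l
    induction l with
    | nil => intro _ a b hab; simp at hab
    | cons x t ih =>
      intro hc a b hab
      cases t with
      | nil => simp at hab
      | cons y s =>
        simp only [List.Chain', List.isChain_cons_cons] at hc
        simp only [List.tail_cons, List.zip_cons_cons, List.mem_cons] at hab
        rcases hab with hab | hab
        · obtain ⟨h1, h2⟩ := Prod.mk.injEq .. ▸ hab
          simp_all
        · exact ih hc.2 a b hab
  have chain_of_zip : ∀ {R' : V → V → Prop} (l : List V),
      (∀ a b, (a, b) ∈ l.zip l.tail → R' a b) → l.Chain' R' := by
    intro R' l
    induction l with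
    | nil => intro _; exact List.isChain_nil
    | cons x t ih =>
      intro hz
      cases t with
      | nil => exact List.isChain_singleton x
      | cons y s =>
        simp only [List.Chain', List.isChain_cons_cons]
        refine ⟨hz x y (by simp), ih fun a b hab => hz a b ?_⟩
        simp only [List.tail_cons, List.zip_cons_cons, List.mem_cons]
        exact Or.inr hab
  intro l hl hlen
  have key : PassesDeleted G G' l := by
    by_contra hpd
    have hl' : IsWalk G' r v l := by
      refine ⟨hl.1, hl.2.1, hl.2.2.1, chain_of_zip l fun a b hab => ?_⟩
      have hG : G.Adj a b := zip_adj l hl.2.2.2 a b hab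
      by_contra hG'
      exact hpd ⟨a, b, ⟨hG, hG'⟩, Or.inl hab⟩
    have hex : ∃ l, IsWalk G' r v l := ⟨l, hl'⟩
    have hmem : len l ∈ {n | ∃ l', IsWalk G' r v l' ∧ len l' = n} := ⟨l, hl', rfl⟩
    have hinf : sInf {n | ∃ l', IsWalk G' r v l' ∧ len l' = n} ≤ len l := Nat.sInf_le hmem
    have hle : llLe (lmDist G' R r v) (lmLen R r l) := by
      simp only [lmDist, hex, ↓reduceIte]
      show sInf _ < len l ∨ _
      rcases lt_or_eq_of_le hinf with hlt | heq
      · exact Or.inl hlt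
      · refine Or.inr ⟨heq, fun ⟨w, hw, hwR⟩ => ⟨l, hl', heq.symm, w, hw, hwR⟩⟩
    rw [hlen] at hle
    exact h.2 hle
  exact ⟨key, Or.inr ⟨hlen ▸ rfl, fun _ => key⟩⟩

end BatchHL
end

section
/- Let S ⊂ V∖{r} and suppose that for every vertex w ∉ S the distance d_{G'}(r,w) is known (equals d_G(r,w)). Then iteratively removing from S a vertex v of minimal distance bound d_bou(v,S) and assigning it distance d_bou(v,S) computes d_{G'}(r,v) correctly for every v ∈ S; i.e., the greedy boundary-repair process is correct. -/
open scoped Classical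

variable {V : Type*}

namespace BatchHL

/-- Correctness of the greedy boundary-repair process.  Let `S ⊆ V∖{r}` and
let `f` record the assigned distances: `f w = d_{G'}(r,w)` for `w ∉ S`, and for every `v ∈ S`
the value assigned by the process, namely the minimum of `f w + 1` over neighbours `w` of `v`
that lie outside `S` or were removed before `v` (equivalently, with `f w < f v`, since the
process removes vertices in nondecreasing order of their distance bounds and vertices removed
together do not contribute to each other).  Then `f v = d_{G'}(r,v)` for every `v ∈ S`. -/
theorem greedy_repair_correct (G' : SimpleGraph V) (r : V) (S : Set V) (hr : r ∉ S)
    (f : V → ℕ∞)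
    (hout : ∀ w, w ∉ S → f w = G'.edist r w)
    (hgreedy : ∀ v ∈ S,
      f v = ⨅ (w : V) (_ : G'.Adj v w ∧ (w ∉ S ∨ f w < f v)), (f w + 1)) :
    ∀ v ∈ S, f v = G'.edist r v := by
  -- Lower bound: f v ≥ edist r v for v ∈ S, by well-founded induction on f v.
  have lower : ∀ n : ℕ∞, ∀ v ∈ S, f v = n → G'.edist r v ≤ n := by
    intro n
    induction n using WellFoundedLT.induction with
    | _ n ih =>
      intro v hv hfv
      rw [← hfv, hgreedy v hv]
      refine le_iInf₂ fun w hw => ?_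
      obtain ⟨hadj, hw⟩ := hw
      have hdw : G'.edist r w ≤ f w := by
        by_cases hwS : w ∈ S
        · have hlt : f w < f v := hw.resolve_left (fun h => h hwS)
          exact ih (f w) (hfv ▸ hlt) w hwS rfl
        · exact le_of_eq (hout w hwS).symm
      calc G'.edist r v ≤ G'.edist r w + G'.edist w v := SimpleGraph.edist_triangle
        _ ≤ f w + 1 := by
            gcongr
            exact (SimpleGraph.edist_eq_one_iff_adj.mpr hadj.symm).le
  have lower' : ∀ v ∈ S, G'.edist r v ≤ f v := fun v hv => lower (f v) v hv rfl
  -- Upper bound via induction on the distance.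
  have upper : ∀ n : ℕ, ∀ v, G'.edist r v = (n : ℕ∞) → f v = (n : ℕ∞) := by
    intro n
    induction n with
    | zero =>
      intro v hv
      have hz : G'.edist r v = 0 := by exact_mod_cast hv
      have hrv : r = v := SimpleGraph.edist_eq_zero_iff.mp hz
      subst hrv
      rw [hout r hr, hv]
    | succ n ih =>
      intro v hv
      by_cases hvS : v ∈ S
      · -- find a neighbour w of v with edist r w = n
        obtain ⟨p, hp⟩ := SimpleGraph.exists_walk_of_edist_eq_coe hv
        have hne : v ≠ r := fun h => hr (h ▸ hvS)
        obtain ⟨w, hadj, q, hq⟩ := SimpleGraph.Walk.exists_eq_cons_of_ne hne p.reverse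
        have hqlen : q.length = n := by
          have := congrArg SimpleGraph.Walk.length hq
          simp [hp] at this
          omega
        have hwle : G'.edist r w ≤ (n : ℕ∞) := by
          have := SimpleGraph.edist_le q.reverse
          simpa [hqlen, SimpleGraph.edist_comm] using this
        have hwge : (n : ℕ∞) ≤ G'.edist r w := by
          by_contra h
          push_neg at h
          have h2 : G'.edist r v ≤ G'.edist r w + 1 := by
            calc G'.edist r v ≤ G'.edist r w + G'.edist w v := SimpleGraph.edist_triangle
              _ ≤ G'.edist r w + 1 := by
                  gcongr
                  exact (SimpleGraph.edist_eq_one_iff_adj.mpr hadj.symm).le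
          rw [hv] at h2
          have h3 : G'.edist r w + 1 ≤ (n : ℕ∞) := Order.add_one_le_of_lt h
          have h4 : (↑(n+1) : ℕ∞) ≤ (n : ℕ∞) := le_trans h2 h3
          have h5 : n + 1 ≤ n := by exact_mod_cast h4
          omega
        have hwn : G'.edist r w = (n : ℕ∞) := le_antisymm hwle hwge
        have hfw : f w = (n : ℕ∞) := ih w hwn
        have hge : (↑(n+1) : ℕ∞) ≤ f v := hv ▸ lower' v hvS
        refine le_antisymm ?_ hge
        by_contra h
        push_neg at h
        have hlt : f w < f v := by
          rw [hfw]
          exact lt_trans (by exact_mod_cast Nat.lt_succ_self n) h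
        have : f v ≤ f w + 1 := by
          rw [hgreedy v hvS]
          exact iInf₂_le w ⟨hadj, Or.inr hlt⟩
        rw [hfw] at this
        exact absurd (le_trans this (by norm_num)) (not_le.mpr h)
      · rw [hout v hvS, hv]
  intro v hv
  rcases eq_or_ne (G'.edist r v) ⊤ with h | h
  · have := lower' v hv
    rw [h] at this
    rw [h]
    exact top_le_iff.mp this
  · obtain ⟨n, hn⟩ := WithTop.ne_top_iff_exists.mp h
    rw [← hn]
    exact upper n v hn.symm

end BatchHL
end
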